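/- Let ε ≠ 0 be real, J a real symmetric n×n matrix, W a real orthogonal n×n matrix, and P a real symmetric n×n matrix. Define M := (1/ε)(WJ − JWᵀ) − (ε/2)(PWJ − JWᵀP), M₊ := (1/ε)(JW − WᵀJ) − (ε/2)(JPW − WᵀPJ), and P₊ := WᵀPW. Then for every λ ∈ ℝ, charpoly(P₊ − (ε²/4)P₊² + λM₊ + λ²J²) = charpoly(P − (ε²/4)P² + λM + λ²J²); i.e., the integrals of motion of the discrete time map are obtained from those of the continuous time rigid body in a quadratic potential by replacing P with P − (ε²/4)P². -/

import Mathlib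

open Matrix Polynomial

lemma my_eval_charpoly {n : ℕ} (A : Matrix (Fin n) (Fin n) ℝ) (t : ℝ) :
    A.charpoly.eval t = (t • (1 : Matrix (Fin n) (Fin n) ℝ) - A).det := by
  rw [Matrix.charpoly, _root_.eval_det, matPolyEquiv_charmatrix]
  simp [Matrix.smul_one_eq_diagonal]

lemma my_det_smul_one_sub_mul_comm {n : ℕ} (t : ℝ) (A B : Matrix (Fin n) (Fin n) ℝ) :
    (t • (1 : Matrix (Fin n) (Fin n) ℝ) - A * B).det
      = (t • (1 : Matrix (Fin n) (Fin n) ℝ) - B * A).det := by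
  rcases eq_or_ne t 0 with rfl | ht
  · simp [Matrix.det_neg, Matrix.det_mul, mul_comm]
  · have h1 : t • (1 : Matrix (Fin n) (Fin n) ℝ) - A * B
        = t • ((1 : Matrix (Fin n) (Fin n) ℝ) - (t⁻¹ • A) * B) := by
      rw [smul_sub, smul_mul_assoc, smul_smul, mul_inv_cancel₀ ht, one_smul]
    have h2 : t • (1 : Matrix (Fin n) (Fin n) ℝ) - B * A
        = t • ((1 : Matrix (Fin n) (Fin n) ℝ) - B * (t⁻¹ • A)) := by
      rw [smul_sub, mul_smul_comm, smul_smul, mul_inv_cancel₀ ht, one_smul]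
    rw [h1, h2, Matrix.det_smul, Matrix.det_smul, Matrix.det_one_sub_mul_comm]

lemma my_charpoly_shift_mul_comm {n : ℕ} (c : ℝ) (A B : Matrix (Fin n) (Fin n) ℝ) :
    (B * A + c • (1 : Matrix (Fin n) (Fin n) ℝ)).charpoly
      = (A * B + c • (1 : Matrix (Fin n) (Fin n) ℝ)).charpoly := by
  apply Polynomial.funext
  intro t
  rw [my_eval_charpoly, my_eval_charpoly]
  have key : ∀ X : Matrix (Fin n) (Fin n) ℝ,
      t • (1 : Matrix (Fin n) (Fin n) ℝ) - (X + c • 1) = (t - c) • 1 - X := by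
    intro X; rw [sub_smul]; abel
  rw [key, key, my_det_smul_one_sub_mul_comm]

/-- The integrals of motion of the discrete time map are obtained from those of the
continuous time rigid body in a quadratic potential by replacing `P` with
`P − (ε²/4)P²`: the characteristic polynomial of `P − (ε²/4)P² + λM + λ²J²` is
preserved under the discrete time evolution. -/
theorem stmt_15 (n : ℕ) (ε : ℝ) (hε : ε ≠ 0)
    (J : Matrix (Fin n) (Fin n) ℝ) (hJ : Jᵀ = J)
    (W : Matrix (Fin n) (Fin n) ℝ) (horth : Wᵀ * W = 1 ∧ W * Wᵀ = 1)
    (P : Matrix (Fin n) (Fin n) ℝ) (hP : Pᵀ = P)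
    (M Mp Pp : Matrix (Fin n) (Fin n) ℝ)
    (hM : M = (1 / ε) • (W * J - J * Wᵀ) - (ε / 2) • (P * W * J - J * Wᵀ * P))
    (hMp : Mp = (1 / ε) • (J * W - Wᵀ * J) - (ε / 2) • (J * P * W - Wᵀ * P * J))
    (hPp : Pp = Wᵀ * P * W) :
    ∀ lam : ℝ,
      (Pp - (ε ^ 2 / 4) • Pp ^ 2 + lam • Mp + (lam ^ 2) • J ^ 2).charpoly
      = (P - (ε ^ 2 / 4) • P ^ 2 + lam • M + (lam ^ 2) • J ^ 2).charpoly := by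
  intro lam
  have hw1 : Wᵀ * W = 1 := horth.1
  have hw2 : W * Wᵀ = 1 := horth.2
  have hw1' : ∀ X : Matrix (Fin n) (Fin n) ℝ, Wᵀ * (W * X) = X := by
    intro X; rw [← Matrix.mul_assoc, hw1, Matrix.one_mul]
  have hw2' : ∀ X : Matrix (Fin n) (Fin n) ℝ, W * (Wᵀ * X) = X := by
    intro X; rw [← Matrix.mul_assoc, hw2, Matrix.one_mul]
  set A : Matrix (Fin n) (Fin n) ℝ := (1 / ε) • W - (ε / 2) • (P * W) + lam • J with hA
  set B : Matrix (Fin n) (Fin n) ℝ := -((1 / ε) • Wᵀ) + (ε / 2) • (Wᵀ * P) + lam • J with hB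
  have hAB : P - (ε ^ 2 / 4) • P ^ 2 + lam • M + (lam ^ 2) • J ^ 2
      = A * B + (1 / ε ^ 2) • (1 : Matrix (Fin n) (Fin n) ℝ) := by
    subst hM
    simp only [hA, hB, Matrix.add_mul, Matrix.sub_mul, Matrix.mul_add, Matrix.mul_sub,
      Matrix.mul_neg, Matrix.neg_mul, Matrix.smul_mul, Matrix.mul_smul, smul_smul,
      Matrix.mul_assoc, hw1, hw2, hw1', hw2', Matrix.mul_one, pow_two]
    match_scalars <;> field_simp <;> ring
  have hBA : Pp - (ε ^ 2 / 4) • Pp ^ 2 + lam • Mp + (lam ^ 2) • J ^ 2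
      = B * A + (1 / ε ^ 2) • (1 : Matrix (Fin n) (Fin n) ℝ) := by
    subst hMp hPp
    simp only [hA, hB, Matrix.add_mul, Matrix.sub_mul, Matrix.mul_add, Matrix.mul_sub,
      Matrix.mul_neg, Matrix.neg_mul, Matrix.smul_mul, Matrix.mul_smul, smul_smul,
      Matrix.mul_assoc, hw1, hw2, hw1', hw2', Matrix.mul_one, pow_two]
    match_scalars <;> field_simp <;> ring
  rw [hAB, hBA, my_charpoly_shift_mul_comm]
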